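/- Let H₁ = {x ∈ K : x ≠ 0 and Tr_m(x⁻¹) = 1}. Then H₁ = {u + ū : u ∈ S, u ≠ 1}; moreover, for all u, v ∈ S with u ≠ 1 and v ≠ 1, one has u + ū = v + v̄ if and only if u = v or u = v̄ (so the map u ↦ u + ū from S \ {1} onto H₁ is two-to-one). -/

import Mathlib

open Finset

/-- Absolute trace-style sum `Tr_n : F → F` for `n = 2m`. -/
def trN (m : ℕ) {F : Type*} [Field F] (x : F) : F :=
  ∑ i ∈ Finset.range (2 * m), x ^ (2 ^ i)

/-- Trace-style sum `Tr_m : F → F` (meant for elements of the subfield `K`). -/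
def trM (m : ℕ) {F : Type*} [Field F] (x : F) : F :=
  ∑ i ∈ Finset.range m, x ^ (2 ^ i)

/-- `ε(0) = 1`, `ε(t) = -1` for `t ≠ 0`. -/
def eps {F : Type*} [Field F] [DecidableEq F] (t : F) : ℤ :=
  if t = 0 then 1 else -1

/-- Kloosterman sum `k_m(μ) = ∑_{x ∈ K, x ≠ 0} χ_m(x + μ x⁻¹)`. -/
def klooM (m : ℕ) {F : Type*} [Field F] [Fintype F] [DecidableEq F] (μ : F) : ℤ :=
  ∑ x ∈ Finset.univ.filter (fun x : F => x ^ (2 ^ m) = x ∧ x ≠ 0),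
    eps (trM m (x + μ * x⁻¹))

/-- Kloosterman sum over the big field: `k_n(μ) = ∑_{x ∈ F, x ≠ 0} χ_n(x + μ x⁻¹)`. -/
def klooN (m : ℕ) {F : Type*} [Field F] [Fintype F] [DecidableEq F] (μ : F) : ℤ :=
  ∑ x ∈ Finset.univ.filter (fun x : F => x ≠ 0), eps (trN m (x + μ * x⁻¹))

/-- Walsh transform of `h : F → F` (with values in `{0,1}`) at `a`. -/
def walsh (m : ℕ) {F : Type*} [Field F] [Fintype F] [DecidableEq F] (h : F → F) (a : F) : ℤ :=
  ∑ x : F, eps (h x + trN m (a * x))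

/-- The Boolean function `f_{λ,μ}(x) = Tr_n(λ x^{2^m+1}) + Tr_n(x)·Tr_n(μ x^{2^m-1})`. -/
def fFun (m : ℕ) {F : Type*} [Field F] (l μ : F) : F → F :=
  fun x => trN m (l * x ^ (2 ^ m + 1)) + trN m x * trN m (μ * x ^ (2 ^ m - 1))

/-- The Boolean function
`g_{λ,μ}(x) = (1 + Tr_n(x))·Tr_n(λ x^{2^m+1}) + Tr_n(x)·Tr_n(μ x^{2^m-1})`. -/
def gFun (m : ℕ) {F : Type*} [Field F] (l μ : F) : F → F :=
  fun x => (1 + trN m x) * trN m (l * x ^ (2 ^ m + 1)) +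
    trN m x * trN m (μ * x ^ (2 ^ m - 1))


section Aux
variable {F : Type*} [Field F] [CharP F 2]

lemma pow2k_add (a b : F) (k : ℕ) : (a + b) ^ (2^k) = a ^ (2^k) + b ^ (2^k) := by
  haveI : Fact (Nat.Prime 2) := ⟨Nat.prime_two⟩
  exact add_pow_char_pow a b 2 k

lemma sum_sq (s : Finset ℕ) (f : ℕ → F) : (∑ i ∈ s, f i) ^ 2 = ∑ i ∈ s, (f i)^2 := by
  haveI : ExpChar F 2 := ExpChar.prime Nat.prime_two
  exact sum_pow_char 2 s f

omit [CharP F 2] in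
lemma pow_sq_succ (a : F) (i : ℕ) : (a ^ (2^i)) ^ 2 = a ^ (2^(i+1)) := by
  rw [← pow_mul, pow_succ]

lemma trsum_quad (n : ℕ) (w : F) :
    ∑ i ∈ range n, (w^2 + w) ^ (2^i) = w ^ (2^n) + w := by
  have key : ∀ i, (w^2 + w) ^ (2^i) = w ^ (2^(i+1)) - w ^ (2^i) := by
    intro i
    rw [pow2k_add, CharTwo.sub_eq_add, ← pow_sq_succ]
    ring
  rw [Finset.sum_congr rfl (fun i _ => key i), Finset.sum_range_sub (fun i => w ^ (2^i))]
  rw [pow_zero, pow_one, CharTwo.sub_eq_add]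

lemma artinSchreier (n : ℕ) (θ c : F)
    (hθ : ∑ i ∈ range n, θ ^ (2^i) = 1) (hθn : θ ^ (2^n) = θ)
    (hc : ∑ i ∈ range n, c ^ (2^i) = 0) : ∃ s : F, s^2 + s = c := by
  set S : ℕ → F := fun i => ∑ j ∈ range i, c ^ (2^j) with hS
  set f : ℕ → F := fun i => S i * θ ^ (2^i) with hf
  refine ⟨∑ i ∈ range n, f i, ?_⟩
  have hSsq : ∀ i, (S i)^2 = S (i+1) + c := by
    intro i
    rw [hS]
    simp only
    rw [sum_sq, Finset.sum_range_succ' (fun j => c ^ (2^j)) i]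
    rw [Finset.sum_congr rfl (fun j _ => pow_sq_succ c j), pow_zero, pow_one]
    have h := CharTwo.add_self_eq_zero (R := F) c
    linear_combination -h
  have hθ1 : ∑ i ∈ range n, θ ^ (2^(i+1)) = 1 := by
    have h1 := Finset.sum_range_succ' (fun j => θ ^ (2^j)) n
    have h2 := Finset.sum_range_succ (fun j => θ ^ (2^j)) n
    rw [h2, hθ, hθn, pow_zero, pow_one] at h1
    exact add_right_cancel h1.symm
  have hsq : (∑ i ∈ range n, f i)^2 = ∑ i ∈ range n, ((S (i+1) + c) * θ ^ (2^(i+1))) := by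
    rw [sum_sq]
    refine Finset.sum_congr rfl (fun i _ => ?_)
    rw [hf]
    simp only
    rw [mul_pow, hSsq, pow_sq_succ]
  have tel := Finset.sum_range_sub f n
  simp only [CharTwo.sub_eq_add] at tel
  have hf0 : f 0 = 0 := by simp [hf, hS]
  have hfn : f n = 0 := by simp only [hf, hS]; rw [hc, zero_mul]
  rw [hsq, ← Finset.sum_add_distrib]
  have step : ∀ i, (S (i+1) + c) * θ ^ (2^(i+1)) + f i
      = (f (i+1) + f i) + c * θ ^ (2^(i+1)) := by
    intro i
    simp only [hf]
    ring
  rw [Finset.sum_congr rfl (fun i _ => step i), Finset.sum_add_distrib, tel, hf0, hfn,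
    ← Finset.mul_sum, hθ1, mul_one, add_zero, zero_add]

/-- trace sum over `2*m` terms vanishes on elements of `K`. -/
lemma trsum_K (m : ℕ) (x : F) (hx : x ^ (2^m) = x) :
    ∑ i ∈ range (2*m), x ^ (2^i) = 0 := by
  rw [two_mul, Finset.sum_range_add]
  have key : ∀ i, x ^ (2^(m+i)) = x ^ (2^i) := by
    intro i
    rw [pow_add, pow_mul, hx]
  rw [Finset.sum_congr rfl (fun i _ => key i)]
  exact CharTwo.add_self_eq_zero _

lemma trsum_add (n : ℕ) (a b : F) :
    ∑ i ∈ range n, (a + b) ^ (2^i)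
      = ∑ i ∈ range n, a ^ (2^i) + ∑ i ∈ range n, b ^ (2^i) := by
  rw [← Finset.sum_add_distrib]
  exact Finset.sum_congr rfl (fun i _ => pow2k_add a b i)

/-- existence of an element of absolute trace 1. -/
lemma exists_tr_one [Fintype F] (n : ℕ) (hn : 0 < n) (hcard : Fintype.card F = 2^n) :
    ∃ θ : F, ∑ i ∈ range n, θ ^ (2^i) = 1 := by
  classical
  set P : Polynomial F := ∑ i ∈ range n, Polynomial.X ^ (2^i) with hP
  have hcoeff : P.coeff (2^(n-1)) = 1 := by
    rw [hP, Polynomial.finset_sum_coeff]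
    rw [Finset.sum_congr rfl (fun i _ => Polynomial.coeff_X_pow (2^i) (2^(n-1)))]
    have hiff : ∀ i, (if 2^(n-1) = 2^i then (1:F) else 0) = if i = n - 1 then 1 else 0 := by
      intro i
      by_cases h : i = n - 1
      · subst h; simp
      · rw [if_neg h, if_neg]
        intro hc
        exact h (Nat.pow_right_injective (le_refl 2) hc.symm)
    rw [Finset.sum_congr rfl (fun i _ => hiff i),
      Finset.sum_ite_eq' (range n) (n-1) (fun _ => (1:F))]
    simp [Nat.sub_lt hn]
  have hP0 : P ≠ 0 := fun h => by simp [h] at hcoeff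
  have hdeg : P.natDegree ≤ 2^(n-1) := by
    apply Polynomial.natDegree_sum_le_of_forall_le
    intro i hi
    rw [Polynomial.natDegree_X_pow]
    have := Finset.mem_range.mp hi
    exact Nat.pow_le_pow_right (by norm_num) (by omega)
  obtain ⟨θ₀, hθ₀⟩ := P.exists_eval_ne_zero_of_natDegree_lt_card hP0 (by
    rw [Cardinal.mk_fintype, hcard]
    have : (2:ℕ)^(n-1) < 2^n := Nat.pow_lt_pow_right (by norm_num) (by omega)
    exact_mod_cast lt_of_le_of_lt (by exact_mod_cast hdeg) (by exact_mod_cast this))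
  have heval : ∀ x : F, P.eval x = ∑ i ∈ range n, x ^ (2^i) := by
    intro x
    rw [hP]
    simp [Polynomial.eval_finset_sum]
  set T := fun x : F => ∑ i ∈ range n, x ^ (2^i) with hT
  have hidem : ∀ x : F, (T x)^2 = T x := by
    intro x
    have hxn : x ^ (2^n) = x := by
      rw [← hcard]; exact FiniteField.pow_card x
    rw [hT]
    simp only
    rw [sum_sq, Finset.sum_congr rfl (fun i _ => pow_sq_succ x i)]
    have h1 := Finset.sum_range_succ' (fun j => x ^ (2^j)) n
    have h2 := Finset.sum_range_succ (fun j => x ^ (2^j)) n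
    rw [h2, hxn, pow_zero, pow_one] at h1
    exact (add_right_cancel h1.symm)
  refine ⟨θ₀, ?_⟩
  have hne : T θ₀ ≠ 0 := by rw [hT]; simpa [heval] using hθ₀
  have := hidem θ₀
  have hfac : T θ₀ * (T θ₀ - 1) = 0 := by linear_combination this
  rcases mul_eq_zero.mp hfac with h | h
  · exact absurd h hne
  · have : T θ₀ = 1 := by linear_combination h
    exact this

end Aux
section Main

variable {F : Type*} [Field F] [CharP F 2]

lemma two0 : (2 : F) = 0 := CharTwo.two_eq_zero

omit [CharP F 2] in
lemma pow_two_comm' (a : F) (k : ℕ) : (a^2)^k = (a^k)^2 := by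
  rw [← pow_mul, ← pow_mul, mul_comm]

theorem stmt1' (m : ℕ) (hm : 0 < m) [Fintype F]
    (hcard : Fintype.card F = 2 ^ (2 * m)) :
    ({x : F | x ^ (2 ^ m) = x ∧ x ≠ 0 ∧ trM m x⁻¹ = 1} =
      {y : F | ∃ u : F, u ^ (2 ^ m + 1) = 1 ∧ u ≠ 1 ∧ y = u + u ^ (2 ^ m)}) ∧
    (∀ u v : F, u ^ (2 ^ m + 1) = 1 → u ≠ 1 → v ^ (2 ^ m + 1) = 1 → v ≠ 1 →
      (u + u ^ (2 ^ m) = v + v ^ (2 ^ m) ↔ (u = v ∨ u = v ^ (2 ^ m)))) := by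
  have hpowcard : ∀ a : F, a ^ (2^(2*m)) = a := fun a => by
    rw [← hcard]; exact FiniteField.pow_card a
  have hexp : (2:ℕ)^m * 2^m = 2^(2*m) := by rw [← pow_add, two_mul]
  -- inverse formula u^(2^m) = u⁻¹ on S
  have hSinv : ∀ u : F, u ^ (2^m + 1) = 1 → u ^ (2^m) = u⁻¹ := by
    intro u hu
    exact eq_inv_of_mul_eq_one_left (by rw [← pow_succ]; exact hu)
  have hS0 : ∀ u : F, u ^ (2^m + 1) = 1 → u ≠ 0 := by
    intro u hu h
    rw [h, zero_pow (by positivity)] at hu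
    exact zero_ne_one hu
  constructor
  · obtain ⟨θ, hθ⟩ := exists_tr_one (2*m) (by omega) hcard
    ext x
    simp only [Set.mem_setOf_eq]
    constructor
    · rintro ⟨hxK, hx0, htr⟩
      have hxinv : (x⁻¹) ^ (2^m) = x⁻¹ := by rw [inv_pow, hxK]
      have htrNc : ∑ i ∈ range (2*m), ((x⁻¹)^2) ^ (2^i) = 0 :=
        trsum_K m _ (by rw [pow_two_comm', hxinv])
      obtain ⟨s, hs⟩ := artinSchreier (2*m) θ ((x⁻¹)^2) hθ (hpowcard θ) htrNc
      set u := x * s with hu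
      clear_value u
      have hquad : u^2 + x*u + 1 = 0 := by
        have h1 : u^2 + x*u = x^2 * (s^2 + s) := by rw [hu]; ring
        rw [hs] at h1
        have h2 : x^2 * (x⁻¹)^2 = 1 := by field_simp
        rw [h1, h2]
        exact CharTwo.add_self_eq_zero 1
      have hubar : (u^(2^m))^2 + x * (u^(2^m)) + 1 = 0 := by
        have h : (u^2 + x*u + 1) ^ (2^m) = (0:F) ^ (2^m) := congrArg (fun t : F => t ^ (2^m)) hquad
        rw [zero_pow (pow_ne_zero m (two_ne_zero)), pow2k_add (u^2 + x*u) 1,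
          pow2k_add (u^2) (x*u), one_pow, mul_pow, hxK, pow_two_comm'] at h
        exact h
      by_cases hfix : u ^ (2^m) = u
      · exfalso
        have hs_fix : s ^ (2^m) = s := by
          have hx2 : x ^ (2^m) * s ^ (2^m) = x * s := by
            rw [← mul_pow, ← hu]; exact hfix
          rw [hxK] at hx2
          exact mul_left_cancel₀ hx0 hx2
        have h0 : ∑ i ∈ range m, ((x⁻¹)^2) ^ (2^i) = 0 := by
          have h := trsum_quad (F := F) m s
          rw [hs_fix, CharTwo.add_self_eq_zero] at h
          rw [← hs]
          exact h
        have h1 : ∑ i ∈ range m, ((x⁻¹)^2) ^ (2^i) = 1 := by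
          have hd : (x⁻¹)^2 = ((x⁻¹)^2 + x⁻¹) + x⁻¹ := by
            rw [add_assoc, CharTwo.add_self_eq_zero, add_zero]
          rw [hd, trsum_add m ((x⁻¹)^2 + x⁻¹) x⁻¹]
          have htr' : ∑ i ∈ range m, (x⁻¹) ^ (2^i) = 1 := htr
          rw [htr', trsum_quad m x⁻¹, hxinv, CharTwo.add_self_eq_zero, zero_add]
        rw [h0] at h1; exact zero_ne_one h1
      · have hdiff : (u^(2^m) + u) * (u^(2^m) + u) = x * (u^(2^m) + u) := by
          linear_combination hubar + hquad +
            (u^(2^m)*u - x*(u^(2^m)) - x*u - 1) * (two0 (F := F))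
        have hwu : u^(2^m) + u ≠ 0 := by
          intro h
          exact hfix (by linear_combination h - u * (two0 (F := F)))
        have hx_eq : u^(2^m) + u = x := mul_right_cancel₀ hwu hdiff
        have huS : u ^ (2^m + 1) = 1 := by
          rw [← hx_eq] at hquad
          rw [pow_succ]
          linear_combination hquad - (u^2 + 1) * (two0 (F := F))
        have hu1 : u ≠ 1 := by
          intro h; apply hfix; rw [h, one_pow]
        exact ⟨u, huS, hu1, by rw [← hx_eq, add_comm]⟩
    · rintro ⟨u, huS, hu1, rfl⟩
      have hu0 : u ≠ 0 := hS0 u huS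
      have hbarinv : u ^ (2^m) = u⁻¹ := hSinv u huS
      have hA : u + 1 ≠ 0 := by
        intro h; exact hu1 (by linear_combination h - (two0 (F := F)))
      have hy0 : u + u ^ (2^m) ≠ 0 := by
        rw [hbarinv]
        intro h
        apply hA
        have h2 : u^2 + 1 = 0 := by
          have := congrArg (fun t : F => t * u) h
          simp only [zero_mul, add_mul, inv_mul_cancel₀ hu0] at this
          linear_combination this
        have h3 : (u+1)^2 = 0 := by rw [CharTwo.add_sq, one_pow]; exact h2
        exact pow_eq_zero_iff (two_ne_zero) |>.mp h3
      refine ⟨?_, hy0, ?_⟩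
      · rw [pow2k_add, ← pow_mul, hexp, hpowcard, add_comm]
      · have hA' : u⁻¹ + 1 ≠ 0 := by
          intro h
          have h2 : (u⁻¹ + 1) * u = 0 := by rw [h, zero_mul]
          rw [add_mul, inv_mul_cancel₀ hu0, one_mul] at h2
          exact hA (by linear_combination h2)
        have hwsq : ((u+1)⁻¹)^2 + (u+1)⁻¹ = (u + u^(2^m))⁻¹ := by
          rw [hbarinv, eq_comm]
          rw [hbarinv] at hy0
          apply inv_eq_of_mul_eq_one_right
          field_simp
          ring_nf
          linear_combination (1 : F) * (two0 (F := F))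
        show ∑ i ∈ range m, ((u + u^(2^m))⁻¹) ^ (2^i) = 1
        rw [← hwsq, trsum_quad]
        have hwbar : ((u+1)⁻¹) ^ (2^m) = (u⁻¹ + 1)⁻¹ := by
          rw [inv_pow, pow2k_add, hbarinv, one_pow]
        rw [hwbar]
        have hA2 : (1:F) + u ≠ 0 := by rwa [add_comm] at hA
        field_simp
        ring
  · intro u v hu hu1 hv hv1
    have hu0 : u ≠ 0 := hS0 u hu
    have hv0 : v ≠ 0 := hS0 v hv
    rw [hSinv u hu, hSinv v hv]
    constructor
    · intro h
      have key : (u + v) * (u*v + 1) = 0 := by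
        have e : (u + v) * (u*v + 1) = u*v*((u + u⁻¹) + (v + v⁻¹)) := by
          field_simp
          ring
        rw [e, h, CharTwo.add_self_eq_zero, mul_zero]
      rcases mul_eq_zero.mp key with h1 | h1
      · left; linear_combination h1 - v * (two0 (F := F))
      · right
        have : u * v = 1 := by linear_combination h1 - (two0 (F := F))
        exact eq_inv_of_mul_eq_one_left this
    · rintro (rfl | h)
      · rfl
      · rw [h, inv_inv, add_comm]
end Main

theorem stmt1 (m : ℕ) (hm : 0 < m) (F : Type*) [Field F] [Fintype F] [DecidableEq F]
    (hcard : Fintype.card F = 2 ^ (2 * m)) :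
    ({x : F | x ^ (2 ^ m) = x ∧ x ≠ 0 ∧ trM m x⁻¹ = 1} =
      {y : F | ∃ u : F, u ^ (2 ^ m + 1) = 1 ∧ u ≠ 1 ∧ y = u + u ^ (2 ^ m)}) ∧
    (∀ u v : F, u ^ (2 ^ m + 1) = 1 → u ≠ 1 → v ^ (2 ^ m + 1) = 1 → v ≠ 1 →
      (u + u ^ (2 ^ m) = v + v ^ (2 ^ m) ↔ (u = v ∨ u = v ^ (2 ^ m)))) := by
  haveI : CharP F (ringChar F) := ringChar.charP F
  obtain ⟨k, hkp, hkcard⟩ := FiniteField.card F (ringChar F)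
  have hchar2 : ringChar F = 2 := by
    have hdvd : ringChar F ∣ 2 ^ (2*m) := by
      rw [← hcard, hkcard]
      exact dvd_pow_self _ (by exact_mod_cast k.ne_zero)
    exact (Nat.prime_dvd_prime_iff_eq hkp Nat.prime_two).mp (hkp.dvd_of_dvd_pow hdvd)
  haveI : CharP F 2 := hchar2 ▸ ringChar.charP F
  exact stmt1' m hm hcard
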